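/- Let A be the Cartan matrix of the affine Lie algebra A_{2ℓ-1}^{(2)} (ℓ ≥ 3), with rows/columns indexed 0,…,ℓ, entries: a_{ii}=2; a_{02}=a_{20}=a_{12}=a_{21}=-1; a_{i,i+1}=a_{i+1,i}=-1 for 2 ≤ i ≤ ℓ-2; a_{ℓ-1,ℓ}=-2 and a_{ℓ,ℓ-1}=-1; all other entries 0. A vector ψ ∈ ℤ^{ℓ+1} satisfying ψ_0 + ψ_1 + 2(ψ_2 + ⋯ + ψ_ℓ) = 0 lies in the ℤ-span of the columns of A if and only if ψ_1 + ψ_3 + ψ_5 + ⋯ (the sum of odd-indexed coordinates) is even. -/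

import Mathlib

open Finset

def Acm (ℓ : ℕ) : ℕ → ℕ → ℤ := fun i j =>
  if i = j then 2
  else if i = ℓ - 1 ∧ j = ℓ then -2
  else if (i = 0 ∧ j = 2) ∨ (i = 2 ∧ j = 0) ∨ (i = 1 ∧ j = 2) ∨ (i = 2 ∧ j = 1)
       ∨ (2 ≤ i ∧ i + 1 = j) ∨ (2 ≤ j ∧ j + 1 = i) then -1 else 0

lemma row0 (ℓ : ℕ) (hℓ : 3 ≤ ℓ) (v : ℕ → ℤ) :
    ∑ k ∈ range (ℓ+1), Acm ℓ 0 k * v k = 2 * v 0 - v 2 := by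
  have key : ∀ k ∈ range (ℓ+1), Acm ℓ 0 k * v k =
      (if k = 0 then 2 * v k else 0) + (if k = 2 then -(v k) else 0) := by
    intro k hk
    simp only [mem_range] at hk
    simp only [Acm]
    split_ifs <;> first | ring1 | (exfalso; omega) | (exfalso; simp_all <;> omega)
  rw [Finset.sum_congr rfl key, Finset.sum_add_distrib,
    Finset.sum_ite_eq' (range (ℓ+1)) 0 (fun k => 2 * v k),
    Finset.sum_ite_eq' (range (ℓ+1)) 2 (fun k => -(v k)),
    if_pos (Finset.mem_range.mpr (by omega)), if_pos (Finset.mem_range.mpr (by omega))]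
  ring

lemma row1 (ℓ : ℕ) (hℓ : 3 ≤ ℓ) (v : ℕ → ℤ) :
    ∑ k ∈ range (ℓ+1), Acm ℓ 1 k * v k = 2 * v 1 - v 2 := by
  have key : ∀ k ∈ range (ℓ+1), Acm ℓ 1 k * v k =
      (if k = 1 then 2 * v k else 0) + (if k = 2 then -(v k) else 0) := by
    intro k hk
    simp only [mem_range] at hk
    simp only [Acm]
    split_ifs <;> first | ring1 | (exfalso; omega) | (exfalso; simp_all <;> omega)
  rw [Finset.sum_congr rfl key, Finset.sum_add_distrib,
    Finset.sum_ite_eq' (range (ℓ+1)) 1 (fun k => 2 * v k),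
    Finset.sum_ite_eq' (range (ℓ+1)) 2 (fun k => -(v k)),
    if_pos (Finset.mem_range.mpr (by omega)), if_pos (Finset.mem_range.mpr (by omega))]
  ring

lemma rowLast (ℓ : ℕ) (hℓ : 3 ≤ ℓ) (v : ℕ → ℤ) :
    ∑ k ∈ range (ℓ+1), Acm ℓ ℓ k * v k = -(v (ℓ-1)) + 2 * v ℓ := by
  have key : ∀ k ∈ range (ℓ+1), Acm ℓ ℓ k * v k =
      (if k = ℓ-1 then -(v k) else 0) + (if k = ℓ then 2 * v k else 0) := by
    intro k hk
    simp only [mem_range] at hk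
    simp only [Acm]
    split_ifs <;> first | ring1 | (exfalso; omega) | (exfalso; simp_all <;> omega)
  rw [Finset.sum_congr rfl key, Finset.sum_add_distrib,
    Finset.sum_ite_eq' (range (ℓ+1)) (ℓ-1) (fun k => -(v k)),
    Finset.sum_ite_eq' (range (ℓ+1)) ℓ (fun k => 2 * v k),
    if_pos (Finset.mem_range.mpr (by omega)), if_pos (Finset.mem_range.mpr (by omega))]

lemma rowMid (ℓ : ℕ) (hℓ : 3 ≤ ℓ) (v : ℕ → ℤ) (i : ℕ) (h2 : 2 ≤ i) (hi : i ≤ ℓ - 1) :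
    ∑ k ∈ range (ℓ+1), Acm ℓ i k * v k
      = -(v (i-1)) + 2 * v i - (if i = ℓ-1 then 2 else 1) * v (i+1)
        - (if i = 2 then v 0 else 0) := by
  have key : ∀ k ∈ range (ℓ+1), Acm ℓ i k * v k =
      (if k = i-1 then -(v k) else 0) + (if k = i then 2 * v k else 0)
      + (if k = i+1 then -(if i = ℓ-1 then (2:ℤ) else 1) * v k else 0)
      + (if k = 0 then (if i = 2 then -(v k) else 0) else 0) := by
    intro k hk
    simp only [mem_range] at hk
    simp only [Acm]
    split_ifs <;> first | ring1 | (exfalso; omega) | (exfalso; simp_all <;> omega)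
  rw [Finset.sum_congr rfl key, Finset.sum_add_distrib, Finset.sum_add_distrib,
    Finset.sum_add_distrib,
    Finset.sum_ite_eq' (range (ℓ+1)) (i-1) (fun k => -(v k)),
    Finset.sum_ite_eq' (range (ℓ+1)) i (fun k => 2 * v k),
    Finset.sum_ite_eq' (range (ℓ+1)) (i+1) (fun k => -(if i = ℓ-1 then (2:ℤ) else 1) * v k),
    Finset.sum_ite_eq' (range (ℓ+1)) 0 (fun k => if i = 2 then -(v k) else 0),
    if_pos (Finset.mem_range.mpr (by omega)), if_pos (Finset.mem_range.mpr (by omega)),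
    if_pos (Finset.mem_range.mpr (by omega)), if_pos (Finset.mem_range.mpr (by omega))]
  split_ifs <;> ring

def Tf (ψ' : ℕ → ℤ) (i : ℕ) : ℤ := ∑ j ∈ Finset.Ico 2 i, ((i : ℤ) - (j : ℤ)) * ψ' j

lemma TA (ψ' : ℕ → ℤ) (m : ℕ) (hm : 1 ≤ m) :
    Tf ψ' (m+1) - Tf ψ' m = ∑ j ∈ Finset.Ico 2 (m+1), ψ' j := by
  unfold Tf
  rcases Nat.lt_or_ge m 2 with h | h
  · interval_cases m
    · norm_num [show Finset.Ico 2 1 = ∅ from rfl, show Finset.Ico 2 2 = ∅ from Finset.Ico_self 2]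
  · rw [Finset.sum_Ico_succ_top (by omega : 2 ≤ m), Finset.sum_Ico_succ_top (by omega : 2 ≤ m)]
    have h1 : ∀ j ∈ Finset.Ico 2 m, (((m+1 : ℕ) : ℤ) - (j:ℤ)) * ψ' j
        = ((m : ℤ) - (j:ℤ)) * ψ' j + ψ' j := by
      intro j _; push_cast; ring
    rw [Finset.sum_congr rfl h1, Finset.sum_add_distrib]
    push_cast
    ring

def ff (ψ' : ℕ → ℤ) (S : ℤ) (i : ℕ) : ℤ := ψ' 1 + (i:ℤ) * S - Tf ψ' i

lemma ff_diff (ψ' : ℕ → ℤ) (S : ℤ) (j : ℕ) (hj : 1 ≤ j) :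
    ff ψ' S (j+1) - ff ψ' S j = S - ∑ k ∈ Finset.Ico 2 (j+1), ψ' k := by
  unfold ff
  have h := TA ψ' j hj
  push_cast
  linarith

lemma Ico_split2 (g : ℕ → ℤ) (m : ℕ) :
    ∑ j ∈ Finset.Ico 2 (m+3+1), g j
      = (∑ j ∈ Finset.Ico 2 (m+2), g j) + g (m+2) + g (m+3) := by
  rw [Finset.sum_Ico_succ_top (by omega : 2 ≤ m+3), show m+3 = m+2+1 by omega,
    Finset.sum_Ico_succ_top (by omega : 2 ≤ m+2)]

lemma main_aux (ℓ : ℕ) (hℓ : 3 ≤ ℓ) (ψ' : ℕ → ℤ)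
    (hlev : ψ' 0 + ψ' 1 + 2 * ∑ k ∈ Finset.Ico 2 (ℓ+1), ψ' k = 0) :
    (∃ v : ℕ → ℤ, ∀ i, i ≤ ℓ → ∑ k ∈ range (ℓ+1), Acm ℓ i k * v k = ψ' i) ↔
      2 ∣ ∑ k ∈ (range (ℓ+1)).filter (fun k => k % 2 = 1), ψ' k := by
  obtain ⟨m, rfl⟩ : ∃ m, ℓ = m + 3 := ⟨ℓ - 3, by omega⟩
  constructor
  · rintro ⟨v, hv⟩
    -- integer equations from the rows
    have e1 : 2 * v 1 - v 2 = ψ' 1 := by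
      have h := hv 1 (by omega)
      rwa [row1 (m+3) (by omega) v] at h
    have elast : -(v (m+2)) + 2 * v (m+3) = ψ' (m+3) := by
      have h := hv (m+3) (by omega)
      rw [rowLast (m+3) (by omega) v] at h
      rwa [show m+3-1 = m+2 by omega] at h
    have emid : ∀ i, 2 ≤ i → i + 1 ≤ m+1 →
        -(v i) + 2 * v (i+1) - v (i+2) = ψ' (i+1) := by
      intro i hi2 him
      have h := hv (i+1) (by omega)
      rw [rowMid (m+3) (by omega) v (i+1) (by omega) (by omega)] at h
      rw [if_neg (by omega), if_neg (by omega)] at h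
      rw [show i+1-1 = i by omega, show i+1+1 = i+2 by omega] at h
      linarith
    have epen : 1 ≤ m → -(v (m+1)) + 2 * v (m+2) - 2 * v (m+3) = ψ' (m+2) := by
      intro h1m
      have h := hv (m+2) (by omega)
      rw [rowMid (m+3) (by omega) v (m+2) (by omega) (by omega)] at h
      rw [if_pos (by omega : m+2 = m+3-1), if_neg (by omega)] at h
      rw [show m+2-1 = m+1 by omega, show m+2+1 = m+3 by omega] at h
      linarith
    -- mod-2 versions
    have d1 : ∀ a b c : ZMod 2, 2*a - b = c → c = b := by decide
    have d2 : ∀ a b c d : ZMod 2, -a + 2*b - c = d → d = a + c := by decide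
    have d3 : ∀ a b c d : ZMod 2, -a + 2*b - 2*c = d → d = a := by decide
    have d4 : ∀ a b c : ZMod 2, -a + 2*b = c → c = a := by decide
    have q1 : ((ψ' 1 : ℤ) : ZMod 2) = ((v 2 : ℤ) : ZMod 2) := by
      have h : ((2 * v 1 - v 2 : ℤ) : ZMod 2) = ((ψ' 1 : ℤ) : ZMod 2) := by rw [e1]
      push_cast at h
      exact d1 _ _ _ h
    have qlast : ((ψ' (m+3) : ℤ) : ZMod 2) = ((v (m+2) : ℤ) : ZMod 2) := by
      have h : ((-(v (m+2)) + 2 * v (m+3) : ℤ) : ZMod 2) = ((ψ' (m+3) : ℤ) : ZMod 2) := by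
        rw [elast]
      push_cast at h
      exact d4 _ _ _ h
    have qmid : ∀ i, 2 ≤ i → i + 1 ≤ m+1 →
        ((ψ' (i+1) : ℤ) : ZMod 2) = ((v i : ℤ) : ZMod 2) + ((v (i+2) : ℤ) : ZMod 2) := by
      intro i hi2 him
      have h : ((-(v i) + 2 * v (i+1) - v (i+2) : ℤ) : ZMod 2)
          = ((ψ' (i+1) : ℤ) : ZMod 2) := by rw [emid i hi2 him]
      push_cast at h
      exact d2 _ _ _ _ h
    have qpen : 1 ≤ m → ((ψ' (m+2) : ℤ) : ZMod 2) = ((v (m+1) : ℤ) : ZMod 2) := by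
      intro h1m
      have h : ((-(v (m+1)) + 2 * v (m+2) - 2 * v (m+3) : ℤ) : ZMod 2)
          = ((ψ' (m+2) : ℤ) : ZMod 2) := by rw [epen h1m]
      push_cast at h
      exact d3 _ _ _ _ h
    -- telescoping sum
    have key : ∀ n, 2 ≤ n → n ≤ m+1 →
        ∑ k ∈ (range (n+1)).filter (fun k => k % 2 = 1), ((ψ' k : ℤ) : ZMod 2)
          = if n % 2 = 1 then ((v (n+1) : ℤ) : ZMod 2) else ((v n : ℤ) : ZMod 2) := by
      intro n hn
      induction n, hn using Nat.le_induction with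
      | base =>
        intro _
        have hset : (range (2+1)).filter (fun k => k % 2 = 1) = {1} := by decide
        rw [hset, Finset.sum_singleton, if_neg (by omega)]
        exact q1
      | succ n hn ih =>
        intro hnm
        have ihh := ih (by omega)
        rw [Finset.range_add_one, Finset.filter_insert]
        by_cases hp : (n+1) % 2 = 1
        · rw [if_pos hp, Finset.sum_insert (by simp)]
          rw [ihh, if_neg (by omega), if_pos hp]
          rw [qmid n hn (by omega), show n+1+1 = n+2 by omega]
          exact (by decide : ∀ a b : ZMod 2, (a + b) + a = b) _ _
        · rw [if_neg hp, ihh, if_pos (by omega), if_neg hp]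
    -- assemble
    have hcast : ∀ (s : Finset ℕ), ((∑ k ∈ s, ψ' k : ℤ) : ZMod 2)
        = ∑ k ∈ s, ((ψ' k : ℤ) : ZMod 2) := by
      intro s
      push_cast
      try rfl
    refine (ZMod.intCast_zmod_eq_zero_iff_dvd _ 2).mp ?_
    rw [hcast]
    rcases Nat.eq_zero_or_pos m with rfl | hm1
    · have hset : (range (0+3+1)).filter (fun k => k % 2 = 1) = {1, 3} := by decide
      rw [hset, show ({1, 3} : Finset ℕ) = insert 1 {3} from rfl,
        Finset.sum_insert (by decide), Finset.sum_singleton]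
      simp only [Nat.zero_add] at qlast
      rw [q1, qlast]
      exact (by decide : ∀ a : ZMod 2, a + a = 0) _
    · have hq := key (m+1) (by omega) le_rfl
      rw [show m+1+1 = m+2 by omega] at hq
      rw [show m+3+1 = m+2+1+1 by omega, Finset.range_add_one, Finset.filter_insert,
        Finset.range_add_one, Finset.filter_insert]
      by_cases hm2 : m % 2 = 1
      · -- m odd : outer index m+2+1 even, inner m+2 odd
        rw [if_neg (by omega : ¬ (m+2+1) % 2 = 1), if_pos (by omega : (m+2) % 2 = 1),
          Finset.sum_insert (by simp)]
        rw [hq, if_neg (by omega)]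
        rw [qpen hm1]
        exact (by decide : ∀ a : ZMod 2, a + a = 0) _
      · -- m even
        rw [if_neg (by omega : ¬ (m+2) % 2 = 1), if_pos (by omega : (m+2+1) % 2 = 1),
          Finset.sum_insert (by simp)]
        rw [hq, if_pos (by omega)]
        rw [show m+2+1 = m+3 by omega, qlast]
        exact (by decide : ∀ a : ZMod 2, a + a = 0) _
  · -- construction
    intro hpar
    set S : ℤ := ∑ k ∈ Finset.Ico 2 (m+3+1), ψ' k with hS
    -- O decomposition
    have hfil : (range (m+3+1)).filter (fun k => k % 2 = 1)
        = insert 1 ((Finset.Ico 2 (m+3+1)).filter (fun k => k % 2 = 1)) := by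
      ext a
      simp only [Finset.mem_insert, Finset.mem_filter, mem_range, Finset.mem_Ico]
      omega
    have hOdec : ∑ k ∈ (range (m+3+1)).filter (fun k => k % 2 = 1), ψ' k
        = ψ' 1 + ∑ k ∈ (Finset.Ico 2 (m+3+1)).filter (fun k => k % 2 = 1), ψ' k := by
      rw [hfil, Finset.sum_insert (by simp)]
    -- difference between weighted sum and odd-filtered sum is even
    have hdiff : 2 ∣ (∑ j ∈ Finset.Ico 2 (m+3+1), (j:ℤ) * ψ' j)
        - ∑ j ∈ (Finset.Ico 2 (m+3+1)).filter (fun k => k % 2 = 1), ψ' j := by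
      rw [Finset.sum_filter, ← Finset.sum_sub_distrib]
      refine Finset.dvd_sum fun j _ => ?_
      by_cases hp : j % 2 = 1
      · rw [if_pos hp]
        obtain ⟨a, rfl⟩ : ∃ a, j = 2*a+1 := ⟨j/2, by omega⟩
        exact ⟨a * ψ' (2*a+1), by push_cast; ring⟩
      · rw [if_neg hp]
        obtain ⟨a, rfl⟩ : ∃ a, j = 2*a := ⟨j/2, by omega⟩
        exact ⟨a * ψ' (2*a), by push_cast; ring⟩
    -- the key identity I1
    have I1 : ff ψ' S (m+2) + ψ' (m+3) = ψ' 1 + ∑ j ∈ Finset.Ico 2 (m+3+1), (j:ℤ) * ψ' j := by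
      unfold ff Tf
      rw [Ico_split2 (fun j => (j:ℤ) * ψ' j) m]
      rw [hS, Ico_split2 ψ' m]
      have key : ((m+2 : ℕ):ℤ) * (∑ j ∈ Finset.Ico 2 (m+2), ψ' j)
          - ∑ j ∈ Finset.Ico 2 (m+2), (((m+2 : ℕ):ℤ) - (j:ℤ)) * ψ' j
          = ∑ j ∈ Finset.Ico 2 (m+2), (j:ℤ) * ψ' j := by
        rw [Finset.mul_sum, ← Finset.sum_sub_distrib]
        exact Finset.sum_congr rfl fun j _ => by ring
      push_cast at key ⊢
      linarith
    have hpar2 : 2 ∣ ff ψ' S (m+2) + ψ' (m+3) := by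
      rw [I1]
      have : ψ' 1 + ∑ j ∈ Finset.Ico 2 (m+3+1), (j:ℤ) * ψ' j
          = (∑ k ∈ (range (m+3+1)).filter (fun k => k % 2 = 1), ψ' k)
            + ((∑ j ∈ Finset.Ico 2 (m+3+1), (j:ℤ) * ψ' j)
              - ∑ j ∈ (Finset.Ico 2 (m+3+1)).filter (fun k => k % 2 = 1), ψ' j) := by
        rw [hOdec]; ring
      rw [this]
      exact dvd_add hpar hdiff
    obtain ⟨xl, hxl⟩ := hpar2
    refine ⟨fun k => if k = 0 then 0 else if k ≤ m+2 then ff ψ' S k else xl, ?_⟩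
    set v : ℕ → ℤ := fun k => if k = 0 then 0 else if k ≤ m+2 then ff ψ' S k else xl with hv
    have hv0 : v 0 = 0 := by simp [hv]
    have hvf : ∀ k, 1 ≤ k → k ≤ m+2 → v k = ff ψ' S k := by
      intro k h1 h2
      simp only [hv]
      rw [if_neg (by omega), if_pos h2]
    have hvl : v (m+3) = xl := by
      simp only [hv]
      rw [if_neg (by omega), if_neg (by omega)]
    -- values of Tf at 1 and 2
    have hT1 : Tf ψ' 1 = 0 := by simp [Tf, show Finset.Ico 2 1 = ∅ from rfl]
    have hT2 : Tf ψ' 2 = 0 := by simp [Tf, Finset.Ico_self]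
    intro i hi
    rcases Nat.lt_or_ge i 2 with h01 | h2i
    · interval_cases i
      · -- row 0
        rw [row0 (m+3) (by omega) v, hv0, hvf 2 (by omega) (by omega)]
        unfold ff
        rw [hT2]
        have : ((2:ℕ):ℤ) = 2 := by norm_num
        rw [this]
        linarith [hlev]
      · -- row 1
        rw [row1 (m+3) (by omega) v, hvf 1 (by omega) (by omega), hvf 2 (by omega) (by omega)]
        unfold ff
        rw [hT1, hT2]
        push_cast
        linarith [hlev]
    · rcases Nat.lt_or_ge i (m+2) with hmid | hhigh
      · -- middle rows 2 ≤ i ≤ m+1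
        rw [rowMid (m+3) (by omega) v i h2i (by omega)]
        rw [if_neg (by omega)]
        have hz : (if i = 2 then v 0 else 0) = 0 := by
          split_ifs <;> simp [hv0]
        rw [hz]
        obtain ⟨a, rfl⟩ : ∃ a, i = a + 2 := ⟨i - 2, by omega⟩
        rw [show a+2-1 = a+1 by omega]
        rw [hvf (a+1) (by omega) (by omega), hvf (a+2) (by omega) (by omega),
          hvf (a+2+1) (by omega) (by omega)]
        have d1 := ff_diff ψ' S (a+1) (by omega)
        have d2 := ff_diff ψ' S (a+2) (by omega)
        have hsp : ∑ k ∈ Finset.Ico 2 (a+2+1), ψ' k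
            = (∑ k ∈ Finset.Ico 2 (a+1+1), ψ' k) + ψ' (a+2) := by
          rw [show a+2+1 = (a+2)+1 by omega, Finset.sum_Ico_succ_top (by omega : 2 ≤ a+2)]
        rw [show a+1+1 = a+2 by omega] at d1
        linarith
      · -- i = m+2 or i = m+3
        rcases Nat.eq_or_lt_of_le hhigh with hpen | hlast
        · -- row m+2 (penultimate)
          rw [← hpen] at hi ⊢
          rw [rowMid (m+3) (by omega) v (m+2) (by omega) (by omega)]
          rw [if_pos (by omega : m+2 = m+3-1)]
          have hz : (if m+2 = 2 then v 0 else 0) = 0 := by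
            split_ifs <;> simp [hv0]
          rw [hz, show m+2-1 = m+1 by omega, show m+2+1 = m+3 by omega]
          rw [hvf (m+1) (by omega) (by omega), hvf (m+2) (by omega) (by omega), hvl]
          have dd := ff_diff ψ' S (m+1) (by omega)
          rw [show m+1+1 = m+2 by omega] at dd
          have hsS : S = (∑ k ∈ Finset.Ico 2 (m+2), ψ' k) + ψ' (m+2) + ψ' (m+3) := by
            rw [hS, Ico_split2 ψ' m]
          linarith [hxl]
        · -- row m+3 (last)
          have : i = m+3 := by omega
          subst this
          rw [rowLast (m+3) (by omega) v]
          rw [show m+3-1 = m+2 by omega, hvf (m+2) (by omega) (by omega), hvl]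
          linarith [hxl]

lemma mulVec_rows {ℓ : ℕ} (A : Matrix (Fin (ℓ+1)) (Fin (ℓ+1)) ℤ)
    (hAb : ∀ i j : Fin (ℓ+1), A i j = Acm ℓ i.val j.val)
    (x : Fin (ℓ+1) → ℤ) (v : ℕ → ℤ) (hxv : ∀ j : Fin (ℓ+1), x j = v j.val)
    (i : Fin (ℓ+1)) :
    A.mulVec x i = ∑ k ∈ range (ℓ+1), Acm ℓ i.val k * v k := by
  simp only [Matrix.mulVec, dotProduct]
  rw [← Fin.sum_univ_eq_sum_range (fun k => Acm ℓ i.val k * v k) (ℓ+1)]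
  exact Finset.sum_congr rfl fun j _ => by rw [hAb i j, hxv j]

lemma sum_transport {n : ℕ} (g : Fin n → ℤ) (g' : ℕ → ℤ)
    (hg : ∀ j : Fin n, g j = g' j.val) (p : ℕ → Prop) [DecidablePred p] :
    ∑ i ∈ Finset.univ.filter (fun i : Fin n => p i.val), g i
      = ∑ k ∈ (range n).filter p, g' k := by
  rw [Finset.sum_filter, Finset.sum_filter,
    ← Fin.sum_univ_eq_sum_range (fun k => if p k then g' k else 0) n]
  exact Finset.sum_congr rfl fun j _ => by rw [hg j]

/-- Stmt 4: In type `A_{2ℓ-1}^{(2)}` (ℓ ≥ 3), a level-zero vector ψ lies in the ℤ-column-span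
of the Cartan matrix iff the sum of its odd-indexed coordinates is even. -/
theorem stmt4 (ℓ : ℕ) (hℓ : 3 ≤ ℓ)
    (A : Matrix (Fin (ℓ + 1)) (Fin (ℓ + 1)) ℤ)
    (hA : ∀ i j : Fin (ℓ + 1), A i j =
      if i = j then 2
      else if i.val = ℓ - 1 ∧ j.val = ℓ then -2
      else if (i.val = 0 ∧ j.val = 2) ∨ (i.val = 2 ∧ j.val = 0)
           ∨ (i.val = 1 ∧ j.val = 2) ∨ (i.val = 2 ∧ j.val = 1)
           ∨ (2 ≤ i.val ∧ i.val + 1 = j.val) ∨ (2 ≤ j.val ∧ j.val + 1 = i.val) then -1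
      else 0)
    (ψ : Fin (ℓ + 1) → ℤ)
    (hψ : ψ 0 + ψ 1
        + 2 * (∑ i ∈ Finset.univ.filter (fun i : Fin (ℓ + 1) => 2 ≤ i.val), ψ i) = 0) :
    (∃ x : Fin (ℓ + 1) → ℤ, A.mulVec x = ψ) ↔
      2 ∣ ∑ i ∈ Finset.univ.filter (fun i : Fin (ℓ + 1) => i.val % 2 = 1), ψ i := by
  classical
  set ψ' : ℕ → ℤ := fun k => if h : k < ℓ + 1 then ψ ⟨k, h⟩ else 0 with hψ'
  have hψv : ∀ j : Fin (ℓ+1), ψ j = ψ' j.val := by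
    intro j
    simp [hψ', j.isLt]; omega
  have hbridge : ∀ i j : Fin (ℓ+1), A i j = Acm ℓ i.val j.val := by
    intro i j
    rw [hA i j]
    simp only [Acm, Fin.ext_iff]
  have h0 : ψ 0 = ψ' 0 := by
    rw [hψv 0]
    norm_num
  have h1 : ψ 1 = ψ' 1 := by
    rw [hψv 1]
    congr 1
    simp [Fin.val_one']
    omega
  have hIco : (range (ℓ+1)).filter (fun k => 2 ≤ k) = Finset.Ico 2 (ℓ+1) := by
    ext a
    simp only [Finset.mem_filter, mem_range, Finset.mem_Ico]
    omega
  have hlev : ψ' 0 + ψ' 1 + 2 * ∑ k ∈ Finset.Ico 2 (ℓ+1), ψ' k = 0 := by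
    rw [← hIco, ← sum_transport ψ ψ' hψv (fun k => 2 ≤ k), ← h0, ← h1]
    exact hψ
  rw [sum_transport ψ ψ' hψv (fun k => k % 2 = 1)]
  rw [← main_aux ℓ hℓ ψ' hlev]
  constructor
  · rintro ⟨x, hx⟩
    refine ⟨fun k => if h : k < ℓ+1 then x ⟨k, h⟩ else 0, ?_⟩
    intro i hi
    have hxv : ∀ j : Fin (ℓ+1), x j
        = (fun k => if h : k < ℓ+1 then x ⟨k, h⟩ else 0) j.val := by
      intro j
      simp [j.isLt]
    have hmv := mulVec_rows A hbridge x (fun k => if h : k < ℓ+1 then x ⟨k, h⟩ else 0) hxv ⟨i, by omega⟩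
    rw [hx] at hmv
    rw [← hmv, hψv ⟨i, by omega⟩]
  · rintro ⟨v, hv⟩
    refine ⟨fun j => v j.val, ?_⟩
    funext j
    rw [mulVec_rows A hbridge _ v (fun _ => rfl) j, hv j.val (by omega), hψv j]
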